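/- For every duplicative forest f, the set of duplicative forests reachable from f under the reflexive-transitive closure of the duplication relation, ordered by this closure, is a finite lattice. -/

import Mathlib

mutual
  /-- A duplicative tree: a node colored white (`false`) or black (`true`) with a forest of children. -/
  inductive DTree : Type
    | node : Bool → DForest → DTree
  /-- A duplicative forest: a finite sequence of duplicative trees. -/
  inductive DForest : Type
    | nil : DForest
    | cons : DTree → DForest → DForest
end

def DForest.append : DForest → DForest → DForest
  | .nil, g => g
  | .cons t f, g => .cons t (f.append g)

mutual
  /-- One duplication step inside a tree. -/
  inductive TStep : DTree → DTree → Prop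
    | dup (c : DForest) : TStep (.node false c) (.node true (c.append c))
    | congr (b : Bool) {c c' : DForest} : FStep c c' → TStep (.node b c) (.node b c')
  /-- One duplication step inside a forest. -/
  inductive FStep : DForest → DForest → Prop
    | head {t t' : DTree} (f : DForest) : TStep t t' → FStep (.cons t f) (.cons t' f)
    | tail (t : DTree) {f f' : DForest} : FStep f f' → FStep (.cons t f) (.cons t f')
end

/-- Duplication order on forests. -/
def FLe : DForest → DForest → Prop := Relation.ReflTransGen FStep

mutual
  /-- Number of black nodes of a tree. -/
  def DTree.black : DTree → ℕ
    | .node b c => (cond b 1 0) + DForest.black c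
  /-- Number of black nodes of a forest. -/
  def DForest.black : DForest → ℕ
    | .nil => 0
    | .cons t f => DTree.black t + DForest.black f
end

def TLe : DTree → DTree → Prop := Relation.ReflTransGen TStep

def DForest.len : DForest → ℕ
  | .nil => 0
  | .cons _ f => f.len + 1

lemma fle_refl (f : DForest) : FLe f f := Relation.ReflTransGen.refl

lemma fle_trans {a b c : DForest} (h1 : FLe a b) (h2 : FLe b c) : FLe a c :=
  Relation.ReflTransGen.trans h1 h2

lemma tle_trans {a b c : DTree} (h1 : TLe a b) (h2 : TLe b c) : TLe a c :=
  Relation.ReflTransGen.trans h1 h2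

lemma fle_nil {x : DForest} (h : FLe .nil x) : x = .nil := by
  induction h with
  | refl => rfl
  | tail h1 h2 ih => subst ih; cases h2

lemma fle_cons_head {t t' : DTree} {f : DForest} (h : TLe t t') :
    FLe (.cons t f) (.cons t' f) :=
  Relation.ReflTransGen.lift (fun x : DTree => DForest.cons x f)
    (fun _ _ hs => FStep.head f hs) _ _ h

lemma fle_cons_tail {t : DTree} {f f' : DForest} (h : FLe f f') :
    FLe (.cons t f) (.cons t f') :=
  Relation.ReflTransGen.lift (fun x : DForest => DForest.cons t x)
    (fun _ _ hs => FStep.tail t hs) _ _ h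

lemma fle_cons {t t' : DTree} {f f' : DForest} (h1 : TLe t t') (h2 : FLe f f') :
    FLe (.cons t f) (.cons t' f') :=
  fle_trans (fle_cons_head h1) (fle_cons_tail h2)

lemma tle_node {b : Bool} {c c' : DForest} (h : FLe c c') :
    TLe (.node b c) (.node b c') :=
  Relation.ReflTransGen.lift (fun x : DForest => DTree.node b x)
    (fun _ _ hs => TStep.congr b hs) _ _ h

lemma fle_cons_inv {t : DTree} {f x : DForest} (h : FLe (.cons t f) x) :
    ∃ t' f', TLe t t' ∧ FLe f f' ∧ x = .cons t' f' := by
  induction h with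
  | refl => exact ⟨t, f, Relation.ReflTransGen.refl, Relation.ReflTransGen.refl, rfl⟩
  | tail h1 h2 ih =>
    obtain ⟨t', f', ht, hf, rfl⟩ := ih
    cases h2 with
    | head _ hs => exact ⟨_, f', ht.tail hs, hf, rfl⟩
    | tail _ hs => exact ⟨t', _, ht, hf.tail hs, rfl⟩

lemma tle_true_inv {c : DForest} {x : DTree} (h : TLe (.node true c) x) :
    ∃ c', FLe c c' ∧ x = .node true c' := by
  induction h with
  | refl => exact ⟨c, Relation.ReflTransGen.refl, rfl⟩
  | tail h1 h2 ih =>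
    obtain ⟨c', hc, rfl⟩ := ih
    cases h2 with
    | congr _ hs => exact ⟨_, hc.tail hs, rfl⟩

theorem fstep_append_left {b : DForest} : ∀ {a a' : DForest}, FStep a a' →
    FStep (a.append b) (a'.append b)
  | .cons t f, _, .head _ hs => FStep.head _ hs
  | .cons t f, _, .tail _ hs => FStep.tail _ (fstep_append_left hs)

theorem fstep_append_right : ∀ (a : DForest) {b b' : DForest}, FStep b b' →
    FStep (a.append b) (a.append b')
  | .nil, _, _, h => h
  | .cons t f, _, _, h => FStep.tail t (fstep_append_right f h)

lemma fle_append {a a' b b' : DForest} (h1 : FLe a a') (h2 : FLe b b') :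
    FLe (a.append b) (a'.append b') := by
  have s1 : FLe (a.append b) (a'.append b) :=
    Relation.ReflTransGen.lift (fun x : DForest => x.append b)
      (fun _ _ hs => fstep_append_left hs) _ _ h1
  have s2 : FLe (a'.append b) (a'.append b') :=
    Relation.ReflTransGen.lift (fun x : DForest => a'.append x)
      (fun _ _ hs => fstep_append_right a' hs) _ _ h2
  exact fle_trans s1 s2

theorem fstep_append_inv : ∀ (a : DForest) {b x : DForest}, FStep (a.append b) x →
    (∃ a', FStep a a' ∧ x = a'.append b) ∨ (∃ b', FStep b b' ∧ x = a.append b')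
  | .nil, b, x, h => .inr ⟨x, h, rfl⟩
  | .cons t f, b, x, h => by
    cases h with
    | head _ hs => exact .inl ⟨_, FStep.head f hs, rfl⟩
    | tail _ hs =>
      rcases fstep_append_inv f hs with ⟨a', h1, rfl⟩ | ⟨b', h1, rfl⟩
      · exact .inl ⟨.cons t a', FStep.tail t h1, rfl⟩
      · exact .inr ⟨b', h1, rfl⟩

lemma fle_append_inv {a b x : DForest} (h : FLe (a.append b) x) :
    ∃ a' b', FLe a a' ∧ FLe b b' ∧ x = a'.append b' := by
  induction h with
  | refl => exact ⟨a, b, Relation.ReflTransGen.refl, Relation.ReflTransGen.refl, rfl⟩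
  | tail h1 h2 ih =>
    obtain ⟨a', b', ha, hb, rfl⟩ := ih
    rcases fstep_append_inv a' h2 with ⟨a'', hs, rfl⟩ | ⟨b'', hs, rfl⟩
    · exact ⟨a'', b', ha.tail hs, hb, rfl⟩
    · exact ⟨a', b'', ha, hb.tail hs, rfl⟩

theorem fstep_len : ∀ {f f' : DForest}, FStep f f' → f.len = f'.len
  | .cons t f, _, .head _ _ => rfl
  | .cons t f, _, .tail _ hs => by
    show (DForest.len f) + 1 = _
    rw [fstep_len hs]; rfl

lemma fle_len {f f' : DForest} (h : FLe f f') : f.len = f'.len := by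
  induction h with
  | refl => rfl
  | tail h1 h2 ih => exact ih.trans (fstep_len h2)

theorem append_inj : ∀ {a a' b b' : DForest}, a.len = a'.len →
    a.append b = a'.append b' → a = a' ∧ b = b'
  | .nil, .nil, b, b', _, h => ⟨rfl, h⟩
  | .cons t f, .cons t' f', b, b', hl, h => by
    simp only [DForest.append, DForest.cons.injEq] at h
    simp only [DForest.len, Nat.add_right_cancel_iff] at hl
    obtain ⟨h1, h2⟩ := h
    obtain ⟨h3, h4⟩ := append_inj hl h2
    exact ⟨by rw [h1, h3], h4⟩

lemma tle_false_inv {c : DForest} {x : DTree} (h : TLe (.node false c) x) :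
    (∃ c', FLe c c' ∧ x = .node false c') ∨
    (∃ d, FLe (c.append c) d ∧ x = .node true d) := by
  induction h with
  | refl => exact .inl ⟨c, Relation.ReflTransGen.refl, rfl⟩
  | tail h1 h2 ih =>
    rcases ih with ⟨c', hc, rfl⟩ | ⟨d, hd, rfl⟩
    · cases h2 with
      | dup _ => exact .inr ⟨_, fle_append hc hc, rfl⟩
      | congr _ hs => exact .inl ⟨_, hc.tail hs, rfl⟩
    · cases h2 with
      | congr _ hs => exact .inr ⟨_, hd.tail hs, rfl⟩

/-- The join (least upper bound) property above a forest. -/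
def FJoin (f : DForest) : Prop :=
  ∀ g h, FLe f g → FLe f h →
    ∃ s, FLe g s ∧ FLe h s ∧ ∀ w, FLe g w → FLe h w → FLe s w

/-- The join (least upper bound) property above a tree. -/
def TJoin (t : DTree) : Prop :=
  ∀ g h, TLe t g → TLe t h →
    ∃ s, TLe g s ∧ TLe h s ∧ ∀ w, TLe g w → TLe h w → TLe s w

lemma fjoin_append {c1 c2 : DForest} (j1 : FJoin c1) (j2 : FJoin c2) :
    FJoin (c1.append c2) := by
  intro g h hg hh
  obtain ⟨a1, b1, ha1, hb1, rfl⟩ := fle_append_inv hg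
  obtain ⟨a2, b2, ha2, hb2, rfl⟩ := fle_append_inv hh
  obtain ⟨s1, hs11, hs12, hsl1⟩ := j1 a1 a2 ha1 ha2
  obtain ⟨s2, hs21, hs22, hsl2⟩ := j2 b1 b2 hb1 hb2
  refine ⟨s1.append s2, fle_append hs11 hs21, fle_append hs12 hs22, ?_⟩
  intro w hw1 hw2
  obtain ⟨p, q, hp, hq, rfl⟩ := fle_append_inv hw1
  obtain ⟨p', q', hp', hq', heq⟩ := fle_append_inv hw2
  have hlen : p.len = p'.len := by
    rw [← fle_len hp, ← fle_len hp', ← fle_len ha1, ← fle_len ha2]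
  obtain ⟨rfl, rfl⟩ := append_inj hlen heq
  exact fle_append (hsl1 p hp hp') (hsl2 q hq hq')

lemma fle_double_least {c cg ch j d : DForest} (hcg : FLe c cg) (hch : FLe c ch)
    (hjl : ∀ w, FLe cg w → FLe ch w → FLe j w)
    (h1 : FLe (cg.append cg) d) (h2 : FLe (ch.append ch) d) :
    FLe (j.append j) d := by
  obtain ⟨p, q, hp, hq, rfl⟩ := fle_append_inv h1
  obtain ⟨p', q', hp', hq', heq⟩ := fle_append_inv h2
  have hlen : p.len = p'.len := by
    rw [← fle_len hp, ← fle_len hp', ← fle_len hcg, ← fle_len hch]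
  obtain ⟨rfl, rfl⟩ := append_inj hlen heq
  exact fle_append (hjl p hp hp') (hjl q hq hq')

lemma tle_white_black {j d : DForest} (h : FLe (j.append j) d) :
    TLe (.node false j) (.node true d) :=
  Relation.ReflTransGen.head (TStep.dup j) (tle_node h)

def TGood (t : DTree) : Prop := {x | TLe t x}.Finite ∧ TJoin t
def FGood (f : DForest) : Prop := {x | FLe f x}.Finite ∧ FJoin f

mutual

theorem tgood : ∀ t : DTree, TGood t
  | .node true c => by
    obtain ⟨hfin, hjoin⟩ := fgood c
    constructor
    · apply Set.Finite.subset (hfin.image (DTree.node true))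
      rintro x hx
      obtain ⟨c', hc, rfl⟩ := tle_true_inv hx
      exact ⟨c', hc, rfl⟩
    · intro g h hg hh
      obtain ⟨cg, hcg, rfl⟩ := tle_true_inv hg
      obtain ⟨ch, hch, rfl⟩ := tle_true_inv hh
      obtain ⟨j, hj1, hj2, hjl⟩ := hjoin cg ch hcg hch
      refine ⟨.node true j, tle_node hj1, tle_node hj2, ?_⟩
      intro w hw1 hw2
      obtain ⟨e, he, rfl⟩ := tle_true_inv hw1
      obtain ⟨e', he', heq⟩ := tle_true_inv hw2
      injection heq with _ h2; subst h2
      exact tle_node (hjl e he he')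
  | .node false c => by
    obtain ⟨hfin, hjoin⟩ := fgood c
    have hgcc : FJoin (c.append c) := fjoin_append hjoin hjoin
    have hfincc : {x | FLe (c.append c) x}.Finite := by
      apply Set.Finite.subset
        ((hfin.prod hfin).image (fun p : DForest × DForest => p.1.append p.2))
      rintro x hx
      obtain ⟨a, b, ha, hb, rfl⟩ := fle_append_inv hx
      exact ⟨(a, b), ⟨ha, hb⟩, rfl⟩
    constructor
    · apply Set.Finite.subset
        ((hfin.image (DTree.node false)).union (hfincc.image (DTree.node true)))
      rintro x hx
      rcases tle_false_inv hx with ⟨c', hc, rfl⟩ | ⟨d, hd, rfl⟩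
      · exact .inl ⟨c', hc, rfl⟩
      · exact .inr ⟨d, hd, rfl⟩
    · intro g h hg hh
      rcases tle_false_inv hg with ⟨cg, hcg, rfl⟩ | ⟨dg, hdg, rfl⟩ <;>
        rcases tle_false_inv hh with ⟨ch, hch, rfl⟩ | ⟨dh, hdh, rfl⟩
      · -- white / white
        obtain ⟨j, hj1, hj2, hjl⟩ := hjoin cg ch hcg hch
        refine ⟨.node false j, tle_node hj1, tle_node hj2, ?_⟩
        intro w hw1 hw2
        rcases tle_false_inv hw1 with ⟨e, he, rfl⟩ | ⟨d, hd, rfl⟩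
        · rcases tle_false_inv hw2 with ⟨e', he', heq⟩ | ⟨d', hd', heq⟩
          · injection heq with _ h2; subst h2
            exact tle_node (hjl e he he')
          · simp at heq
        · rcases tle_false_inv hw2 with ⟨e', he', heq⟩ | ⟨d', hd', heq⟩
          · simp at heq
          · injection heq with _ h2; subst h2
            exact tle_white_black (fle_double_least hcg hch hjl hd hd')
      · -- white / black
        obtain ⟨j, hj1, hj2, hjl⟩ := hgcc (cg.append cg) dh (fle_append hcg hcg) hdh
        refine ⟨.node true j, tle_white_black hj1, tle_node hj2, ?_⟩
        intro w hw1 hw2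
        obtain ⟨e, he, rfl⟩ := tle_true_inv hw2
        rcases tle_false_inv hw1 with ⟨e', he', heq⟩ | ⟨d', hd', heq⟩
        · simp at heq
        · injection heq with _ h2; subst h2
          exact tle_node (hjl e hd' he)
      · -- black / white
        obtain ⟨j, hj1, hj2, hjl⟩ := hgcc dg (ch.append ch) hdg (fle_append hch hch)
        refine ⟨.node true j, tle_node hj1, tle_white_black hj2, ?_⟩
        intro w hw1 hw2
        obtain ⟨e, he, rfl⟩ := tle_true_inv hw1
        rcases tle_false_inv hw2 with ⟨e', he', heq⟩ | ⟨d', hd', heq⟩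
        · simp at heq
        · injection heq with _ h2; subst h2
          exact tle_node (hjl e he hd')
      · -- black / black
        obtain ⟨j, hj1, hj2, hjl⟩ := hgcc dg dh hdg hdh
        refine ⟨.node true j, tle_node hj1, tle_node hj2, ?_⟩
        intro w hw1 hw2
        obtain ⟨e, he, rfl⟩ := tle_true_inv hw1
        obtain ⟨e', he', heq⟩ := tle_true_inv hw2
        injection heq with _ h2; subst h2
        exact tle_node (hjl e he he')

theorem fgood : ∀ f : DForest, FGood f
  | .nil => by
    constructor
    · exact Set.Finite.subset (Set.finite_singleton .nil) (fun x hx => fle_nil hx)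
    · intro g h hg hh
      obtain rfl := fle_nil hg
      obtain rfl := fle_nil hh
      exact ⟨.nil, fle_refl _, fle_refl _, fun w hw _ => hw⟩
  | .cons t f => by
    obtain ⟨ht, hjt⟩ := tgood t
    obtain ⟨hf, hjf⟩ := fgood f
    constructor
    · apply Set.Finite.subset
        ((ht.prod hf).image (fun p : DTree × DForest => .cons p.1 p.2))
      rintro x hx
      obtain ⟨t', f', h1, h2, rfl⟩ := fle_cons_inv hx
      exact ⟨(t', f'), ⟨h1, h2⟩, rfl⟩
    · intro g h hg hh
      obtain ⟨g1, g2, hg1, hg2, rfl⟩ := fle_cons_inv hg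
      obtain ⟨h1t, h2f, hh1, hh2, rfl⟩ := fle_cons_inv hh
      obtain ⟨s1, hs11, hs12, hsl1⟩ := hjt g1 h1t hg1 hh1
      obtain ⟨s2, hs21, hs22, hsl2⟩ := hjf g2 h2f hg2 hh2
      refine ⟨.cons s1 s2, fle_cons hs11 hs21, fle_cons hs12 hs22, ?_⟩
      intro w hw1 hw2
      obtain ⟨w1, w2, hwa, hwb, rfl⟩ := fle_cons_inv hw1
      obtain ⟨w1', w2', hwa', hwb', heq⟩ := fle_cons_inv hw2
      injection heq with e1 e2
      subst e1; subst e2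
      exact fle_cons (hsl1 w1 hwa hwa') (hsl2 w2 hwb hwb')

end

noncomputable instance : DecidableEq DForest := Classical.decEq _

lemma meet_aux {f g h : DForest} (hj : FJoin f) (hg : FLe f g) (hh : FLe f h) :
    ∀ S : Finset DForest, (∀ w ∈ S, FLe f w ∧ FLe w g ∧ FLe w h) →
      ∃ m, FLe f m ∧ FLe m g ∧ FLe m h ∧ ∀ w ∈ S, FLe w m := by
  intro S
  induction S using Finset.induction with
  | empty =>
    intro _
    exact ⟨f, fle_refl f, hg, hh, by simp⟩
  | insert _ _ hna ih =>
    rename_i a S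
    intro hS
    obtain ⟨m, hm0, hm1, hm2, hm3⟩ := ih fun w hw => hS w (Finset.mem_insert_of_mem hw)
    obtain ⟨ha0, ha1, ha2⟩ := hS a (Finset.mem_insert_self a S)
    obtain ⟨s, hs1, hs2, hsl⟩ := hj a m ha0 hm0
    refine ⟨s, fle_trans ha0 hs1, hsl g ha1 hm1, hsl h ha2 hm2, ?_⟩
    intro w hw
    rcases Finset.mem_insert.1 hw with rfl | hw
    · exact hs1
    · exact fle_trans (hm3 w hw) hs2

/-- For every duplicative forest f, the set D*(f) of forests reachable from f,
ordered by the duplication order, is a finite lattice: it is finite and every pair of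
elements has a least upper bound and a greatest lower bound in D*(f). -/
theorem duplicative_forest_lattice (f : DForest) :
    {g : DForest | FLe f g}.Finite ∧
    (∀ g h : DForest, FLe f g → FLe f h →
      (∃ s, FLe f s ∧ FLe g s ∧ FLe h s ∧
        ∀ w, FLe f w → FLe g w → FLe h w → FLe s w) ∧
      (∃ m, FLe f m ∧ FLe m g ∧ FLe m h ∧
        ∀ w, FLe f w → FLe w g → FLe w h → FLe w m)) := by
  obtain ⟨hfin, hjoin⟩ := fgood f
  refine ⟨hfin, fun g h hg hh => ⟨?_, ?_⟩⟩
  · obtain ⟨s, hs1, hs2, hsl⟩ := hjoin g h hg hh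
    exact ⟨s, fle_trans hg hs1, hs1, hs2, fun w _ hw1 hw2 => hsl w hw1 hw2⟩
  · set L : Set DForest := {w | FLe f w ∧ FLe w g ∧ FLe w h} with hL
    have hLfin : L.Finite := hfin.subset fun w hw => hw.1
    obtain ⟨m, hm0, hm1, hm2, hm3⟩ :=
      meet_aux hjoin hg hh hLfin.toFinset (fun w hw => hLfin.mem_toFinset.1 hw)
    exact ⟨m, hm0, hm1, hm2, fun w hw1 hw2 hw3 =>
      hm3 w (hLfin.mem_toFinset.2 ⟨hw1, hw2, hw3⟩)⟩
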